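/- Let G be a simple graph on n vertices with no isolated vertices whose largest normalized Laplacian eigenvalue equals (n+1)/(n−1), and let v, w be non-adjacent vertices of G having at least one common neighbor. Then d(v) = d(w), every vertex in N(v) ∩ N(w) has degree n−1, any two distinct vertices in N(v) ∩ N(w) are adjacent, |N(v) ∩ N(w)| = max(1, d(v) + d(w) + 2 − n), and d(v) ∈ {(n−1)/2, n−2}. -/

import Mathlib

open Finset

/-- The normalized graph Laplacian `Lf(x) = f(x) - (1/d(x)) ∑_{y ~ x} f(y)`. -/
noncomputable def normLap {V : Type*} [Fintype V] [DecidableEq V] (G : SimpleGraph V)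
    [DecidableRel G.Adj] (f : V → ℝ) : V → ℝ :=
  fun x => f x - (∑ y ∈ G.neighborFinset x, f y) / (G.degree x : ℝ)

/-- `μ` is an eigenvalue of the normalized Laplacian of `G`. -/
def IsNormLapEigenvalue {V : Type*} [Fintype V] [DecidableEq V] (G : SimpleGraph V)
    [DecidableRel G.Adj] (μ : ℝ) : Prop :=
  ∃ f : V → ℝ, f ≠ 0 ∧ normLap G f = μ • f

/-- `μ` is the largest eigenvalue of the normalized Laplacian of `G`. -/
def IsMaxNormLapEigenvalue {V : Type*} [Fintype V] [DecidableEq V] (G : SimpleGraph V)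
    [DecidableRel G.Adj] (μ : ℝ) : Prop :=
  IsNormLapEigenvalue G μ ∧ ∀ ν, IsNormLapEigenvalue G ν → ν ≤ μ

section auxrig
set_option linter.unusedSectionVars false
set_option linter.unusedSectionVars false
variable {V : Type*} [Fintype V] [DecidableEq V] (G : SimpleGraph V) [DecidableRel G.Adj]

lemma nbr_sum_eq (F : V → V → ℝ) (x : V) :
    ∑ y ∈ G.neighborFinset x, F x y = ∑ y, if G.Adj x y then F x y else 0 := by
  rw [SimpleGraph.neighborFinset_eq_filter, Finset.sum_filter]

lemma nbr_sum_swap (F : V → V → ℝ) :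
    ∑ x, ∑ y ∈ G.neighborFinset x, F x y = ∑ x, ∑ y ∈ G.neighborFinset x, F y x := by
  rw [Finset.sum_congr rfl fun x _ => nbr_sum_eq G F x,
      Finset.sum_congr rfl fun x _ => nbr_sum_eq G (fun a b => F b a) x,
      Finset.sum_comm]
  refine Finset.sum_congr rfl fun b _ => Finset.sum_congr rfl fun a _ => ?_
  by_cases h : G.Adj b a
  · rw [if_pos h, if_pos h.symm]
  · rw [if_neg h, if_neg (fun h' : G.Adj a b => h h'.symm)]

/-- The symmetrized normalized Laplacian as an operator on Euclidean space. -/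
noncomputable def symOp : EuclideanSpace ℝ V →ₗ[ℝ] EuclideanSpace ℝ V where
  toFun u := WithLp.toLp 2 (fun x => u x - ∑ y ∈ G.neighborFinset x, u y / Real.sqrt ((G.degree x : ℝ) * (G.degree y : ℝ)))
  map_add' u v := by
    ext x
    simp only [PiLp.add_apply, PiLp.toLp_apply]
    rw [Finset.sum_congr rfl (fun y _ => add_div (u y) (v y) _), Finset.sum_add_distrib]
    ring
  map_smul' c u := by
    ext x
    simp only [PiLp.smul_apply, PiLp.toLp_apply, smul_eq_mul, RingHom.id_apply]
    rw [Finset.sum_congr rfl (fun y _ => mul_div_assoc c (u y) _), ← Finset.mul_sum]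
    ring

lemma symOp_apply (u : EuclideanSpace ℝ V) (x : V) :
    symOp G u x = u x - ∑ y ∈ G.neighborFinset x, u y / Real.sqrt ((G.degree x : ℝ) * (G.degree y : ℝ)) := rfl

lemma symOp_symm : (symOp G).IsSymmetric := by
  intro u v
  rw [real_inner_comm v (symOp G u), real_inner_comm (symOp G v) u]
  simp only [RCLike.inner_apply, PiLp.inner_apply, conj_trivial, symOp_apply]
  have lhs : (∑ x, (u x - ∑ y ∈ G.neighborFinset x, u y / Real.sqrt ((G.degree x : ℝ) * (G.degree y : ℝ))) * v x)
      = (∑ x, u x * v x) - ∑ x, ∑ y ∈ G.neighborFinset x, u y * v x / Real.sqrt ((G.degree x : ℝ) * (G.degree y : ℝ)) := by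
    rw [← Finset.sum_sub_distrib]
    refine Finset.sum_congr rfl fun x _ => ?_
    rw [sub_mul, Finset.sum_mul]
    congr 1
    exact Finset.sum_congr rfl fun y _ => by ring
  have rhs : (∑ x, u x * (v x - ∑ y ∈ G.neighborFinset x, v y / Real.sqrt ((G.degree x : ℝ) * (G.degree y : ℝ))))
      = (∑ x, u x * v x) - ∑ x, ∑ y ∈ G.neighborFinset x, u x * v y / Real.sqrt ((G.degree x : ℝ) * (G.degree y : ℝ)) := by
    rw [← Finset.sum_sub_distrib]
    refine Finset.sum_congr rfl fun x _ => ?_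
    rw [mul_sub, Finset.mul_sum]
    congr 1
    exact Finset.sum_congr rfl fun y _ => by ring
  rw [lhs, rhs]
  congr 1
  rw [nbr_sum_swap G (fun x y => u y * v x / Real.sqrt ((G.degree x : ℝ) * (G.degree y : ℝ)))]
  refine Finset.sum_congr rfl fun x _ => Finset.sum_congr rfl fun y _ => ?_
  rw [mul_comm ((G.degree y : ℝ)) ((G.degree x : ℝ))]


lemma qform_nonneg {L : ℝ} (hdeg : ∀ x, 1 ≤ G.degree x)
    (hb : ∀ ν, IsNormLapEigenvalue G ν → ν ≤ L) (g : V → ℝ) :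
    (1 - L) * (∑ x, (G.degree x : ℝ) * g x ^ 2) ≤ ∑ x, ∑ y ∈ G.neighborFinset x, g x * g y := by
  by_contra hcon
  push_neg at hcon
  have hdpos : ∀ x : V, (0:ℝ) < (G.degree x : ℝ) := fun x => by
    exact_mod_cast Nat.lt_of_lt_of_le Nat.zero_lt_one (hdeg x)
  have hsqpos : ∀ x : V, (0:ℝ) < Real.sqrt (G.degree x : ℝ) :=
    fun x => Real.sqrt_pos.mpr (hdpos x)
  have hsq : ∀ x : V, Real.sqrt (G.degree x : ℝ) * Real.sqrt (G.degree x : ℝ) = (G.degree x : ℝ) :=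
    fun x => Real.mul_self_sqrt (le_of_lt (hdpos x))
  have hg : g ≠ 0 := by
    rintro rfl; simp at hcon
  obtain ⟨x₀, hx₀⟩ : ∃ x, g x ≠ 0 := Function.ne_iff.mp hg
  haveI : Nonempty V := ⟨x₀⟩
  set h : EuclideanSpace ℝ V := WithLp.toLp 2 (fun x => g x * Real.sqrt (G.degree x : ℝ)) with hh
  have hS2pos : (0:ℝ) < ∑ x, (G.degree x : ℝ) * g x ^ 2 := by
    apply Finset.sum_pos' (fun x _ => by positivity)
    exact ⟨x₀, Finset.mem_univ _,
      mul_pos (hdpos x₀) (by rw [pow_two]; exact mul_self_pos.mpr hx₀)⟩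
  set S2 : ℝ := ∑ x, (G.degree x : ℝ) * g x ^ 2 with hS2
  set DS : ℝ := ∑ x, ∑ y ∈ G.neighborFinset x, g x * g y with hDS
  have hinner_hh : (inner ℝ h h : ℝ) = S2 := by
    simp only [PiLp.inner_apply, RCLike.inner_apply, conj_trivial, hh, hS2, PiLp.toLp_apply]
    refine Finset.sum_congr rfl fun x _ => ?_
    have e := hsq x
    linear_combination (g x ^ 2) * e
  have hnorm : ‖h‖ ^ 2 = S2 := by rw [← real_inner_self_eq_norm_sq]; exact hinner_hh
  have hinner_Th : (inner ℝ (symOp G h) h : ℝ) = S2 - DS := by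
    rw [real_inner_comm h (symOp G h)]
    simp only [PiLp.inner_apply, RCLike.inner_apply, conj_trivial, symOp_apply]
    have key : ∀ x : V,
        (h x - ∑ y ∈ G.neighborFinset x, h y / Real.sqrt ((G.degree x : ℝ) * (G.degree y : ℝ))) * h x
        = (G.degree x : ℝ) * g x ^ 2 - ∑ y ∈ G.neighborFinset x, g x * g y := by
      intro x
      have inner_eq : ∀ y ∈ G.neighborFinset x,
          h y / Real.sqrt ((G.degree x : ℝ) * (G.degree y : ℝ)) = g y / Real.sqrt (G.degree x : ℝ) := by
        intro y _
        have hy : h y = g y * Real.sqrt (G.degree y : ℝ) := rfl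
        rw [hy, Real.sqrt_mul (le_of_lt (hdpos x)),
          div_eq_div_iff (ne_of_gt (mul_pos (hsqpos x) (hsqpos y))) (ne_of_gt (hsqpos x))]
        ring
      rw [Finset.sum_congr rfl inner_eq, sub_mul]
      congr 1
      · have hx : h x = g x * Real.sqrt (G.degree x : ℝ) := rfl
        rw [hx]; linear_combination (g x ^ 2) * hsq x
      · have hx : h x = g x * Real.sqrt (G.degree x : ℝ) := rfl
        rw [← Finset.sum_div, hx]
        have hstep : ((∑ y ∈ G.neighborFinset x, g y) / Real.sqrt (G.degree x : ℝ))
            * (g x * Real.sqrt (G.degree x : ℝ))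
            = (∑ y ∈ G.neighborFinset x, g y) * g x := by
          have hne := ne_of_gt (hsqpos x)
          field_simp
        rw [hstep, Finset.sum_mul]
        exact Finset.sum_congr rfl fun y _ => by ring
    rw [Finset.sum_congr rfl (fun x _ => key x), Finset.sum_sub_distrib]
  have hne : h ≠ 0 := by
    intro h0
    apply hx₀
    have : h x₀ = 0 := by rw [h0]; rfl
    rw [hh] at this
    exact (mul_eq_zero.mp this).resolve_right (ne_of_gt (hsqpos x₀))
  -- rayleigh of h exceeds L
  have hray : L < (inner ℝ (symOp G h) h : ℝ) / ‖h‖ ^ 2 := by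
    rw [hinner_Th, hnorm]
    rw [lt_div_iff₀ hS2pos]
    nlinarith [hcon]
  -- the sup-eigenvalue
  set ν : ℝ := ⨆ x : {x : EuclideanSpace ℝ V // x ≠ 0},
      RCLike.re (inner ℝ (symOp G ↑x) (↑x : EuclideanSpace ℝ V) : ℝ) / ‖(↑x : EuclideanSpace ℝ V)‖ ^ 2 with hν
  have hev : Module.End.HasEigenvalue (symOp G) ν :=
    (symOp_symm G).hasEigenvalue_iSup_of_finiteDimensional
  have hbdd : BddAbove (Set.range fun x : {x : EuclideanSpace ℝ V // x ≠ 0} =>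
      RCLike.re (inner ℝ (symOp G ↑x) (↑x : EuclideanSpace ℝ V) : ℝ) / ‖(↑x : EuclideanSpace ℝ V)‖ ^ 2) := by
    refine ⟨‖LinearMap.toContinuousLinearMap (symOp G)‖, ?_⟩
    rintro r ⟨x, rfl⟩
    have hxne : (x : EuclideanSpace ℝ V) ≠ 0 := x.2
    have hxpos : (0:ℝ) < ‖(x : EuclideanSpace ℝ V)‖ := norm_pos_iff.mpr hxne
    simp only [RCLike.re_to_real]
    rw [div_le_iff₀ (by positivity)]
    calc (inner ℝ (symOp G ↑x) (↑x : EuclideanSpace ℝ V) : ℝ)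
        ≤ ‖symOp G ↑x‖ * ‖(↑x : EuclideanSpace ℝ V)‖ := real_inner_le_norm _ _
      _ ≤ ‖LinearMap.toContinuousLinearMap (symOp G)‖ * ‖(↑x : EuclideanSpace ℝ V)‖ * ‖(↑x : EuclideanSpace ℝ V)‖ := by
          have := (LinearMap.toContinuousLinearMap (symOp G)).le_opNorm (↑x : EuclideanSpace ℝ V)
          have hx : (LinearMap.toContinuousLinearMap (symOp G)) (↑x : EuclideanSpace ℝ V) = symOp G ↑x := rfl
          rw [hx] at this
          nlinarith [norm_nonneg (symOp G (↑x : EuclideanSpace ℝ V))]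
      _ = ‖LinearMap.toContinuousLinearMap (symOp G)‖ * ‖(↑x : EuclideanSpace ℝ V)‖ ^ 2 := by ring
  have hle : (inner ℝ (symOp G h) h : ℝ) / ‖h‖ ^ 2 ≤ ν := by
    have := le_ciSup hbdd ⟨h, hne⟩
    simpa [hν] using this
  have hLν : L < ν := lt_of_lt_of_le hray hle
  -- eigenvector of symOp gives normLap eigenvalue
  obtain ⟨u, hu⟩ := hev.exists_hasEigenvector
  have huapp : symOp G u = ν • u := hu.apply_eq_smul
  obtain ⟨z₀, hz₀⟩ : ∃ x, u x ≠ 0 := by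
    by_contra hall
    push_neg at hall
    exact hu.2 (by ext x; exact hall x)
  set φ : V → ℝ := fun x => u x / Real.sqrt (G.degree x : ℝ) with hφ
  have : IsNormLapEigenvalue G ν := by
    refine ⟨φ, ?_, ?_⟩
    · intro h0
      apply hz₀
      have : φ z₀ = 0 := by rw [h0]; rfl
      rw [hφ] at this
      have := (div_eq_zero_iff.mp this).resolve_right (ne_of_gt (hsqpos z₀))
      exact this
    · funext x
      have he : symOp G u x = ν * u x := by rw [huapp]; rfl
      rw [symOp_apply] at he
      have inner_eq : ∀ y ∈ G.neighborFinset x,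
          u y / Real.sqrt ((G.degree x : ℝ) * (G.degree y : ℝ))
          = φ y / Real.sqrt (G.degree x : ℝ) := by
        intro y _
        rw [Real.sqrt_mul (le_of_lt (hdpos x)), hφ]
        field_simp
      rw [Finset.sum_congr rfl inner_eq, ← Finset.sum_div] at he
      show φ x - (∑ y ∈ G.neighborFinset x, φ y) / (G.degree x : ℝ) = ν * φ x
      have hd : (G.degree x : ℝ) = Real.sqrt (G.degree x:ℝ) * Real.sqrt (G.degree x:ℝ) := (hsq x).symm
      have hx : φ x = u x / Real.sqrt (G.degree x : ℝ) := rfl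
      have h2 : (∑ y ∈ G.neighborFinset x, φ y) / (G.degree x : ℝ)
          = ((∑ y ∈ G.neighborFinset x, φ y) / Real.sqrt (G.degree x:ℝ)) / Real.sqrt (G.degree x:ℝ) := by
        rw [div_div, ← hd]
      rw [hx, h2, ← sub_div, he, mul_div_assoc]
  exact absurd (hb ν this) (not_le.mpr hLν)

end auxrig

lemma F_nonneg {V : Type*} [Fintype V] [DecidableEq V] (G : SimpleGraph V) [DecidableRel G.Adj]
    {c : ℝ}
    (hq : ∀ g : V → ℝ, 0 ≤ c * (∑ x, (G.degree x : ℝ) * g x ^ 2)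
      + ∑ x, ∑ y ∈ G.neighborFinset x, g x * g y)
    (v w : V) (hvw : v ≠ w) (hnadj : ¬ G.Adj v w) (α β s : ℝ) :
    0 ≤ c * (G.degree v : ℝ) * α ^ 2 + c * (G.degree w : ℝ) * β ^ 2
      + c * (∑ u ∈ G.neighborFinset v ∩ G.neighborFinset w, (G.degree u : ℝ)) * s ^ 2
      + 2 * ((G.neighborFinset v ∩ G.neighborFinset w).card : ℝ) * s * α
      + 2 * ((G.neighborFinset v ∩ G.neighborFinset w).card : ℝ) * s * β
      + (∑ u ∈ G.neighborFinset v ∩ G.neighborFinset w,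
          ((G.neighborFinset u ∩ (G.neighborFinset v ∩ G.neighborFinset w)).card : ℝ)) * s ^ 2 := by
  set S := G.neighborFinset v ∩ G.neighborFinset w with hS
  have hvS : v ∉ S := by
    intro hv
    exact G.irrefl ((SimpleGraph.mem_neighborFinset _ _ _).mp (Finset.mem_of_mem_inter_left hv))
  have hwS : w ∉ S := by
    intro hw
    exact hnadj ((SimpleGraph.mem_neighborFinset _ _ _).mp (Finset.mem_of_mem_inter_left hw))
  set g : V → ℝ := fun x => if x = v then α else if x = w then β else if x ∈ S then s else 0 with hg
  have gsplit : ∀ y, g y = (if y = v then α else 0) + (if y = w then β else 0)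
      + (if y ∈ S then s else 0) := by
    intro y
    rw [hg]
    by_cases h1 : y = v
    · subst h1; simp [hvS, hvw]
    · by_cases h2 : y = w
      · subst h2; simp [hwS, h1]
      · simp [h1, h2]
  -- sum of g over any finset
  have sumg : ∀ R : Finset V, ∑ y ∈ R, g y
      = (if v ∈ R then α else 0) + (if w ∈ R then β else 0) + ((R ∩ S).card : ℝ) * s := by
    intro R
    rw [Finset.sum_congr rfl fun y _ => gsplit y]
    rw [Finset.sum_add_distrib, Finset.sum_add_distrib]
    congr 1
    · congr 1
      · exact Finset.sum_ite_eq' R v (fun _ => α)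
      · exact Finset.sum_ite_eq' R w (fun _ => β)
    · rw [Finset.sum_ite_mem, Finset.sum_const, nsmul_eq_mul]
  -- squares
  have gsq : ∀ y, g y ^ 2 = (if y = v then α ^ 2 else 0) + (if y = w then β ^ 2 else 0)
      + (if y ∈ S then s ^ 2 else 0) := by
    intro y
    rw [hg]
    by_cases h1 : y = v
    · subst h1; simp [hvS, hvw]
    · by_cases h2 : y = w
      · subst h2; simp [hwS, h1]
      · by_cases h3 : y ∈ S <;> simp [h1, h2, h3]
  have hSum1 : ∑ x, (G.degree x : ℝ) * g x ^ 2
      = (G.degree v : ℝ) * α ^ 2 + (G.degree w : ℝ) * β ^ 2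
        + (∑ u ∈ S, (G.degree u : ℝ)) * s ^ 2 := by
    have e : ∀ x : V, (G.degree x : ℝ) * g x ^ 2
        = (if x = v then (G.degree x : ℝ) * α ^ 2 else 0)
          + (if x = w then (G.degree x : ℝ) * β ^ 2 else 0)
          + (if x ∈ S then (G.degree x : ℝ) * s ^ 2 else 0) := by
      intro x
      rw [gsq]
      simp only [mul_add, mul_ite, mul_zero]
    rw [Finset.sum_congr rfl fun x _ => e x, Finset.sum_add_distrib, Finset.sum_add_distrib,
        Finset.sum_ite_eq' Finset.univ v (fun x => (G.degree x : ℝ) * α ^ 2),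
        Finset.sum_ite_eq' Finset.univ w (fun x => (G.degree x : ℝ) * β ^ 2),
        Finset.sum_ite_mem, Finset.univ_inter,
        if_pos (Finset.mem_univ v), if_pos (Finset.mem_univ w), Finset.sum_mul]
  have hSvsub : S ⊆ G.neighborFinset v := Finset.inter_subset_left
  have hSwsub : S ⊆ G.neighborFinset w := Finset.inter_subset_right
  have hvNv : v ∉ G.neighborFinset v := by
    intro h; exact G.irrefl ((SimpleGraph.mem_neighborFinset _ _ _).mp h)
  have hwNv : w ∉ G.neighborFinset v := by
    intro h; exact hnadj ((SimpleGraph.mem_neighborFinset _ _ _).mp h)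
  have hwNw : w ∉ G.neighborFinset w := by
    intro h; exact G.irrefl ((SimpleGraph.mem_neighborFinset _ _ _).mp h)
  have hvNw : v ∉ G.neighborFinset w := by
    intro h; exact hnadj (((SimpleGraph.mem_neighborFinset _ _ _).mp h).symm)
  have hNvS : G.neighborFinset v ∩ S = S := Finset.inter_eq_right.mpr hSvsub
  have hNwS : G.neighborFinset w ∩ S = S := Finset.inter_eq_right.mpr hSwsub
  have hCv : ∑ y ∈ G.neighborFinset v, g y = (S.card : ℝ) * s := by
    rw [sumg, if_neg hvNv, if_neg hwNv, hNvS]; ring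
  have hCw : ∑ y ∈ G.neighborFinset w, g y = (S.card : ℝ) * s := by
    rw [sumg, if_neg hvNw, if_neg hwNw, hNwS]; ring
  have hCu : ∀ u ∈ S, ∑ y ∈ G.neighborFinset u, g y
      = α + β + ((G.neighborFinset u ∩ S).card : ℝ) * s := by
    intro u hu
    have huv : G.Adj u v := ((SimpleGraph.mem_neighborFinset _ _ _).mp (hSvsub hu)).symm
    have huw : G.Adj u w := ((SimpleGraph.mem_neighborFinset _ _ _).mp (hSwsub hu)).symm
    rw [sumg, if_pos ((SimpleGraph.mem_neighborFinset _ _ _).mpr huv),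
        if_pos ((SimpleGraph.mem_neighborFinset _ _ _).mpr huw)]
  have hSum2 : ∑ x, ∑ y ∈ G.neighborFinset x, g x * g y
      = 2 * (S.card : ℝ) * s * α + 2 * (S.card : ℝ) * s * β
        + (∑ u ∈ S, ((G.neighborFinset u ∩ S).card : ℝ)) * s ^ 2 := by
    have e : ∀ x : V, ∑ y ∈ G.neighborFinset x, g x * g y
        = (if x = v then α * ∑ y ∈ G.neighborFinset x, g y else 0)
          + (if x = w then β * ∑ y ∈ G.neighborFinset x, g y else 0)
          + (if x ∈ S then s * ∑ y ∈ G.neighborFinset x, g y else 0) := by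
      intro x
      rw [← Finset.mul_sum, gsplit]
      simp only [add_mul, ite_mul, zero_mul]
    rw [Finset.sum_congr rfl fun x _ => e x, Finset.sum_add_distrib, Finset.sum_add_distrib,
        Finset.sum_ite_eq' Finset.univ v (fun x => α * ∑ y ∈ G.neighborFinset x, g y),
        Finset.sum_ite_eq' Finset.univ w (fun x => β * ∑ y ∈ G.neighborFinset x, g y),
        Finset.sum_ite_mem, Finset.univ_inter,
        if_pos (Finset.mem_univ v), if_pos (Finset.mem_univ w), hCv, hCw,
        Finset.sum_congr rfl fun u hu => by rw [hCu u hu]]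
    rw [Finset.sum_congr rfl fun u (hu : u ∈ S) =>
          (by ring : s * (α + β + ((G.neighborFinset u ∩ S).card : ℝ) * s)
            = (s * α + s * β) + ((G.neighborFinset u ∩ S).card : ℝ) * s ^ 2),
        Finset.sum_add_distrib, Finset.sum_const, Finset.sum_mul, nsmul_eq_mul]
    ring
  have h := hq g
  rw [hSum1, hSum2] at h
  ring_nf at h ⊢
  linarith [h]

lemma nonneg_of_mul_nonneg_pos {a b : ℝ} (h : 0 ≤ a * b) (hb : 0 < b) : 0 ≤ a := by
  nlinarith

set_option maxHeartbeats 2000000 in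
theorem rigidity_conclusions {V : Type*} [Fintype V] [DecidableEq V]
    (G : SimpleGraph V) [DecidableRel G.Adj] (n : ℕ) (hn : n = Fintype.card V)
    (hdeg : ∀ v : V, 1 ≤ G.degree v)
    (hmax : IsMaxNormLapEigenvalue G (((n : ℝ) + 1) / ((n : ℝ) - 1)))
    (v w : V) (hvw : v ≠ w) (hnadj : ¬ G.Adj v w)
    (hcommon : ∃ x : V, G.Adj v x ∧ G.Adj x w) :
    G.degree v = G.degree w ∧
    (∀ x ∈ G.neighborFinset v ∩ G.neighborFinset w, G.degree x = n - 1) ∧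
    (∀ x ∈ G.neighborFinset v ∩ G.neighborFinset w,
      ∀ y ∈ G.neighborFinset v ∩ G.neighborFinset w, x ≠ y → G.Adj x y) ∧
    (((G.neighborFinset v ∩ G.neighborFinset w).card : ℝ) =
      max 1 ((G.degree v : ℝ) + (G.degree w : ℝ) + 2 - (n : ℝ))) ∧
    ((G.degree v : ℝ) = ((n : ℝ) - 1) / 2 ∨ G.degree v = n - 2) := by
  obtain ⟨-, hub⟩ := hmax
  obtain ⟨u₀, hu₀1, hu₀2⟩ := hcommon
  have hu₀S : u₀ ∈ G.neighborFinset v ∩ G.neighborFinset w :=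
    Finset.mem_inter.mpr ⟨(SimpleGraph.mem_neighborFinset _ _ _).mpr hu₀1,
      (SimpleGraph.mem_neighborFinset _ _ _).mpr hu₀2.symm⟩
  have hu₀v : u₀ ≠ v := fun h => G.irrefl (h ▸ hu₀1)
  have hu₀w : u₀ ≠ w := fun h => G.irrefl (h ▸ hu₀2)
  have hvS : v ∉ G.neighborFinset v ∩ G.neighborFinset w := by
    intro hv
    exact G.irrefl ((SimpleGraph.mem_neighborFinset _ _ _).mp (Finset.mem_of_mem_inter_left hv))
  have hwS : w ∉ G.neighborFinset v ∩ G.neighborFinset w := by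
    intro hw
    exact hnadj ((SimpleGraph.mem_neighborFinset _ _ _).mp (Finset.mem_of_mem_inter_left hw))
  -- n ≥ 3
  have h3 : 3 ≤ n := by
    rw [hn]
    have hcard : ({v, w, u₀} : Finset V).card = 3 := by
      rw [Finset.card_insert_of_notMem (by simp [hvw, Ne.symm hu₀v]),
        Finset.card_insert_of_notMem (by simp [Ne.symm hu₀w]), Finset.card_singleton]
    calc 3 = ({v, w, u₀} : Finset V).card := hcard.symm
      _ ≤ Fintype.card V := Finset.card_le_univ _
  have h3' : (3:ℝ) ≤ (n:ℝ) := by exact_mod_cast h3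
  have hn1 : (0:ℝ) < (n:ℝ) - 1 := by linarith
  set c : ℝ := 2 / ((n:ℝ) - 1) with hcdef
  have hc : 0 < c := by rw [hcdef]; positivity
  have hc2 : c * ((n:ℝ) - 1) = 2 := by rw [hcdef]; field_simp
  -- the quadratic form is nonnegative
  have hq : ∀ g : V → ℝ, 0 ≤ c * (∑ x, (G.degree x : ℝ) * g x ^ 2)
      + ∑ x, ∑ y ∈ G.neighborFinset x, g x * g y := by
    intro g
    have h := qform_nonneg G hdeg hub g
    have hL : (1:ℝ) - ((n:ℝ) + 1) / ((n:ℝ) - 1) = -c := by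
      rw [hcdef]; field_simp; ring
    rw [hL] at h
    linarith
  have Fineq := F_nonneg G hq v w hvw hnadj
  -- abbreviations
  set rt := (((G.neighborFinset v ∩ G.neighborFinset w).card : ℕ) : ℝ) with hrtdef
  set X := ∑ u ∈ G.neighborFinset v ∩ G.neighborFinset w, (G.degree u : ℝ) with hXdef
  set P := ∑ u ∈ G.neighborFinset v ∩ G.neighborFinset w,
      ((G.neighborFinset u ∩ (G.neighborFinset v ∩ G.neighborFinset w)).card : ℝ) with hPdef
  set A := c * ((G.degree v : ℝ) + (G.degree w : ℝ)) with hAdef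
  -- combinatorial bounds
  have htpos : 0 < (G.neighborFinset v ∩ G.neighborFinset w).card :=
    Finset.card_pos.mpr ⟨u₀, hu₀S⟩
  have hrt1 : (1:ℝ) ≤ rt := by rw [hrtdef]; exact_mod_cast htpos
  have hrt0 : rt ≠ 0 := by linarith
  have hrtn : rt ≤ (n:ℝ) - 2 := by
    have hsub : (G.neighborFinset v ∩ G.neighborFinset w).card + 2 ≤ n := by
      have h1 : (insert v (insert w (G.neighborFinset v ∩ G.neighborFinset w))).card
          ≤ Fintype.card V := Finset.card_le_univ _
      rw [Finset.card_insert_of_notMem (by simp [hvw, hvS]),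
        Finset.card_insert_of_notMem hwS] at h1
      omega
    have : (((G.neighborFinset v ∩ G.neighborFinset w).card : ℕ) : ℝ) + 2 ≤ (n:ℝ) := by
      exact_mod_cast hsub
    rw [hrtdef]; linarith
  have hdle : ∀ u : V, (G.degree u : ℝ) ≤ (n:ℝ) - 1 := by
    intro u
    have := G.degree_lt_card_verts u
    rw [← hn] at this
    have : (G.degree u : ℝ) + 1 ≤ (n:ℝ) := by exact_mod_cast this
    linarith
  have hX_le : X ≤ rt * ((n:ℝ) - 1) := by
    rw [hXdef]
    calc ∑ u ∈ G.neighborFinset v ∩ G.neighborFinset w, (G.degree u : ℝ)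
        ≤ ∑ _u ∈ G.neighborFinset v ∩ G.neighborFinset w, ((n:ℝ) - 1) :=
          Finset.sum_le_sum fun u _ => hdle u
      _ = rt * ((n:ℝ) - 1) := by rw [Finset.sum_const, nsmul_eq_mul, hrtdef]
  have hcard_nbrS : ∀ u ∈ G.neighborFinset v ∩ G.neighborFinset w,
      ((G.neighborFinset u ∩ (G.neighborFinset v ∩ G.neighborFinset w)).card : ℝ) ≤ rt - 1 := by
    intro u hu
    have hsub : G.neighborFinset u ∩ (G.neighborFinset v ∩ G.neighborFinset w)
        ⊆ (G.neighborFinset v ∩ G.neighborFinset w).erase u := by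
      intro y hy
      have hy1 := Finset.mem_of_mem_inter_left hy
      have hy2 := Finset.mem_of_mem_inter_right hy
      refine Finset.mem_erase.mpr ⟨?_, hy2⟩
      exact fun h => G.irrefl (h ▸ (SimpleGraph.mem_neighborFinset _ _ _).mp hy1)
    have hle := Finset.card_le_card hsub
    rw [Finset.card_erase_of_mem hu] at hle
    have : ((G.neighborFinset u ∩ (G.neighborFinset v ∩ G.neighborFinset w)).card : ℝ)
        ≤ (((G.neighborFinset v ∩ G.neighborFinset w).card - 1 : ℕ) : ℝ) := by exact_mod_cast hle
    rw [Nat.cast_sub (by omega)] at this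
    rw [hrtdef]
    simpa using this
  have hP_le : P ≤ rt * (rt - 1) := by
    rw [hPdef]
    calc ∑ u ∈ G.neighborFinset v ∩ G.neighborFinset w,
          ((G.neighborFinset u ∩ (G.neighborFinset v ∩ G.neighborFinset w)).card : ℝ)
        ≤ ∑ _u ∈ G.neighborFinset v ∩ G.neighborFinset w, (rt - 1) :=
          Finset.sum_le_sum hcard_nbrS
      _ = rt * (rt - 1) := by rw [Finset.sum_const, nsmul_eq_mul, hrtdef]
  have hd12 : (G.degree v : ℝ) + (G.degree w : ℝ) ≤ (n:ℝ) - 2 + rt := by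
    have hcup : (G.neighborFinset v ∪ G.neighborFinset w).card
        + (G.neighborFinset v ∩ G.neighborFinset w).card = G.degree v + G.degree w := by
      rw [Finset.card_union_add_card_inter, G.card_neighborFinset_eq_degree,
        G.card_neighborFinset_eq_degree]
    have hsub : G.neighborFinset v ∪ G.neighborFinset w ⊆ Finset.univ \ {v, w} := by
      intro y hy
      rcases Finset.mem_union.mp hy with h | h
      · have hadj := (SimpleGraph.mem_neighborFinset _ _ _).mp h
        refine Finset.mem_sdiff.mpr ⟨Finset.mem_univ _, ?_⟩
        simp only [Finset.mem_insert, Finset.mem_singleton]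
        push_neg
        exact ⟨fun hh => G.irrefl (hh ▸ hadj), fun hh => hnadj (hh ▸ hadj)⟩
      · have hadj := (SimpleGraph.mem_neighborFinset _ _ _).mp h
        refine Finset.mem_sdiff.mpr ⟨Finset.mem_univ _, ?_⟩
        simp only [Finset.mem_insert, Finset.mem_singleton]
        push_neg
        constructor
        · exact fun hh => hnadj (hh ▸ hadj).symm
        · exact fun hh => G.irrefl (hh ▸ hadj)
    have hcard2 : (Finset.univ \ {v, w} : Finset V).card = n - 2 := by
      rw [Finset.card_sdiff_of_subset (Finset.subset_univ _), Finset.card_univ, ← hn]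
      congr 1
      rw [Finset.card_insert_of_notMem (by simp [hvw]), Finset.card_singleton]
    have h5 : G.degree v + G.degree w ≤ (n - 2) + (G.neighborFinset v ∩ G.neighborFinset w).card := by
      have := Finset.card_le_card hsub
      rw [hcard2] at this
      omega
    have h6 : ((G.degree v : ℕ) : ℝ) + ((G.degree w : ℕ) : ℝ)
        ≤ (((n - 2 : ℕ) : ℝ)) + rt := by
      rw [hrtdef]; exact_mod_cast h5
    rw [Nat.cast_sub (by omega)] at h6
    simpa using h6
  -- positivity of A
  have hrd1t : rt ≤ (G.degree v : ℝ) := by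
    rw [hrtdef]
    have := Finset.card_le_card (Finset.inter_subset_left :
      G.neighborFinset v ∩ G.neighborFinset w ⊆ G.neighborFinset v)
    rw [G.card_neighborFinset_eq_degree] at this
    exact_mod_cast this
  have hA : 0 < A := by
    rw [hAdef]
    have : (0:ℝ) < (G.degree v : ℝ) + (G.degree w : ℝ) := by
      have : (0:ℝ) ≤ (G.degree w : ℝ) := Nat.cast_nonneg _
      linarith
    exact mul_pos hc this
  -- main inequality  4 t² ≤ A (cX + P)
  have h1 : 4 * rt ^ 2 ≤ A * (c * X + P) := by
    have h0 := Fineq (2 * rt) (2 * rt) (-A)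
    have e : c * (G.degree v : ℝ) * (2 * rt) ^ 2 + c * (G.degree w : ℝ) * (2 * rt) ^ 2
        + c * X * (-A) ^ 2 + 2 * rt * (-A) * (2 * rt) + 2 * rt * (-A) * (2 * rt)
        + P * (-A) ^ 2 = A * (A * (c * X + P) - 4 * rt ^ 2) := by
      rw [hAdef]; ring
    rw [e] at h0
    have := nonneg_of_mul_nonneg_pos (mul_comm A _ ▸ h0) hA
    linarith
  -- the sandwich
  have hcX : c * X ≤ 2 * rt := by
    have h := mul_le_mul_of_nonneg_left hX_le hc.le
    have e : c * (rt * ((n:ℝ) - 1)) = 2 * rt := by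
      linear_combination rt * hc2
    linarith [h, e.le, e.ge]
  have u1 : c * X + P ≤ rt * (rt + 1) := by nlinarith [hcX, hP_le]
  have u2 : A * (c * X + P) ≤ A * (rt * (rt + 1)) := mul_le_mul_of_nonneg_left u1 hA.le
  have hrtt1 : (0:ℝ) < rt * (rt + 1) := by nlinarith [hrt1]
  have u3 : A * (rt * (rt + 1)) ≤ (c * ((n:ℝ) - 2 + rt)) * (rt * (rt + 1)) := by
    apply mul_le_mul_of_nonneg_right _ hrtt1.le
    rw [hAdef]
    exact mul_le_mul_of_nonneg_left hd12 hc.le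
  have e4 : (4 * rt ^ 2 - (c * ((n:ℝ) - 2 + rt)) * (rt * (rt + 1))) * ((n:ℝ) - 1)
      = 2 * rt * ((rt - 1) * ((n:ℝ) - 2 - rt)) := by
    rw [hcdef]
    field_simp
    ring
  have hfact : 0 ≤ (rt - 1) * ((n:ℝ) - 2 - rt) :=
    mul_nonneg (by linarith) (by linarith)
  have u4 : (c * ((n:ℝ) - 2 + rt)) * (rt * (rt + 1)) ≤ 4 * rt ^ 2 := by
    have h7 : 0 ≤ (4 * rt ^ 2 - (c * ((n:ℝ) - 2 + rt)) * (rt * (rt + 1))) :=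
      nonneg_of_mul_nonneg_pos (by nlinarith [e4, hfact, hrt1]) hn1
    linarith
  -- extract the equalities
  have hAC : A * (c * X + P) = 4 * rt ^ 2 := le_antisymm (by linarith) h1
  have hAB : A * (rt * (rt + 1)) = 4 * rt ^ 2 := le_antisymm (by linarith) (by linarith)
  have hBC : (c * ((n:ℝ) - 2 + rt)) * (rt * (rt + 1)) = 4 * rt ^ 2 :=
    le_antisymm u4 (by linarith)
  have hCval : c * X + P = rt * (rt + 1) :=
    mul_left_cancel₀ (ne_of_gt hA) (hAC.trans hAB.symm)
  have hAval : A = c * ((n:ℝ) - 2 + rt) :=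
    mul_right_cancel₀ (ne_of_gt hrtt1) (hAB.trans hBC.symm)
  have hd12eq : (G.degree v : ℝ) + (G.degree w : ℝ) = (n:ℝ) - 2 + rt :=
    mul_left_cancel₀ (ne_of_gt hc) (by rw [← hAdef]; exact hAval)
  have hfact0 : (rt - 1) * ((n:ℝ) - 2 - rt) = 0 := by
    have h5 : (4 * rt ^ 2 - (c * ((n:ℝ) - 2 + rt)) * (rt * (rt + 1))) = 0 := by linarith
    have h6 : 2 * rt * ((rt - 1) * ((n:ℝ) - 2 - rt)) = 0 := by
      rw [← e4, h5, zero_mul]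
    rcases mul_eq_zero.mp h6 with h | h
    · exact absurd h (by positivity)
    · exact h
  have hcXeq : c * X = 2 * rt := by nlinarith [hCval, hcX, hP_le]
  have hPeq : P = rt * (rt - 1) := by nlinarith [hCval, hcX, hP_le]
  have hXval : X = rt * ((n:ℝ) - 1) := by
    apply mul_left_cancel₀ (ne_of_gt hc)
    rw [hcXeq]
    linear_combination -rt * hc2
  -- d(v) = d(w) via kernel equation
  have hAval2 : A * (rt + 1) = 4 * rt := by
    apply mul_right_cancel₀ hrt0
    linear_combination hAB
  have hb0 : ∀ ε : ℝ, 0 ≤ c * (G.degree v : ℝ) * ε ^ 2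
      + (4 * rt * c * (G.degree v : ℝ) - 2 * rt * A) * ε := by
    intro ε
    have h0 := Fineq (2 * rt + ε) (2 * rt) (-A)
    have e : c * (G.degree v : ℝ) * (2 * rt + ε) ^ 2 + c * (G.degree w : ℝ) * (2 * rt) ^ 2
        + c * X * (-A) ^ 2 + 2 * rt * (-A) * (2 * rt + ε) + 2 * rt * (-A) * (2 * rt)
        + P * (-A) ^ 2
        = c * (G.degree v : ℝ) * ε ^ 2 + (4 * rt * c * (G.degree v : ℝ) - 2 * rt * A) * ε := by
      linear_combination (A ^ 2) * hCval + (rt * A) * hAval2 - (4 * rt ^ 2) * hAdef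
    rw [e] at h0
    exact h0
  have ha : 0 < c * (G.degree v : ℝ) := mul_pos hc (by linarith)
  have hbeq : 4 * rt * c * (G.degree v : ℝ) - 2 * rt * A = 0 := by
    set b := 4 * rt * c * (G.degree v : ℝ) - 2 * rt * A with hbdef
    have hb := hb0 (-b / (2 * (c * (G.degree v : ℝ))))
    have e2 : c * (G.degree v : ℝ) * (-b / (2 * (c * (G.degree v : ℝ)))) ^ 2
        + b * (-b / (2 * (c * (G.degree v : ℝ)))) = -(b ^ 2) / (4 * (c * (G.degree v : ℝ))) := by
      field_simp
      ring
    rw [e2] at hb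
    have e3 : -(b ^ 2) / (4 * (c * (G.degree v : ℝ))) * (4 * (c * (G.degree v : ℝ)))
        = -(b ^ 2) := by rw [div_mul_cancel₀ _ (ne_of_gt (by linarith [ha]))]
    have h8 : 0 ≤ -(b ^ 2) := by
      rw [← e3]
      exact mul_nonneg hb (by positivity)
    have h9 : b ^ 2 = 0 := le_antisymm (by linarith) (sq_nonneg b)
    exact pow_eq_zero_iff (two_ne_zero) |>.mp h9
  have hdeq : (G.degree v : ℝ) = (G.degree w : ℝ) := by
    have h10 : 2 * rt * c * ((G.degree v : ℝ) - (G.degree w : ℝ)) = 0 := by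
      rw [hAdef] at hbeq
      linear_combination hbeq
    have h11 := mul_eq_zero.mp h10
    rcases h11 with h | h
    · exact absurd h (by positivity)
    · linarith
  -- now assemble the conclusions
  have hdegeq : G.degree v = G.degree w := by exact_mod_cast hdeq
  -- every common neighbor has degree n - 1
  have hdeg_all : ∀ x ∈ G.neighborFinset v ∩ G.neighborFinset w, G.degree x = n - 1 := by
    have hallR : ∀ x ∈ G.neighborFinset v ∩ G.neighborFinset w,
        (G.degree x : ℝ) = (n:ℝ) - 1 := by
      by_contra hcon
      push_neg at hcon
      obtain ⟨x0, hx0, hx0ne⟩ := hcon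
      have hlt : X < rt * ((n:ℝ) - 1) := by
        rw [hXdef]
        calc ∑ u ∈ G.neighborFinset v ∩ G.neighborFinset w, (G.degree u : ℝ)
            < ∑ _u ∈ G.neighborFinset v ∩ G.neighborFinset w, ((n:ℝ) - 1) :=
              Finset.sum_lt_sum (fun u _ => hdle u)
                ⟨x0, hx0, lt_of_le_of_ne (hdle x0) hx0ne⟩
          _ = rt * ((n:ℝ) - 1) := by rw [Finset.sum_const, nsmul_eq_mul, hrtdef]
      rw [hXval] at hlt
      exact lt_irrefl _ hlt
    intro x hx
    have := hallR x hx
    have hx1 : ((G.degree x + 1 : ℕ) : ℝ) = (n : ℝ) := by push_cast; linarith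
    have : G.degree x + 1 = n := by exact_mod_cast hx1
    omega
  -- common neighbors form a clique
  have hclique : ∀ x ∈ G.neighborFinset v ∩ G.neighborFinset w,
      ∀ y ∈ G.neighborFinset v ∩ G.neighborFinset w, x ≠ y → G.Adj x y := by
    have hallP : ∀ u ∈ G.neighborFinset v ∩ G.neighborFinset w,
        ((G.neighborFinset u ∩ (G.neighborFinset v ∩ G.neighborFinset w)).card : ℝ) = rt - 1 := by
      by_contra hcon
      push_neg at hcon
      obtain ⟨x0, hx0, hx0ne⟩ := hcon
      have hlt : P < rt * (rt - 1) := by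
        rw [hPdef]
        calc ∑ u ∈ G.neighborFinset v ∩ G.neighborFinset w,
              ((G.neighborFinset u ∩ (G.neighborFinset v ∩ G.neighborFinset w)).card : ℝ)
            < ∑ _u ∈ G.neighborFinset v ∩ G.neighborFinset w, (rt - 1) :=
              Finset.sum_lt_sum hcard_nbrS
                ⟨x0, hx0, lt_of_le_of_ne (hcard_nbrS x0 hx0) hx0ne⟩
          _ = rt * (rt - 1) := by rw [Finset.sum_const, nsmul_eq_mul, hrtdef]
      rw [hPeq] at hlt
      exact lt_irrefl _ hlt
    intro x hx y hy hxy
    have hcardeq : (G.neighborFinset x ∩ (G.neighborFinset v ∩ G.neighborFinset w)).card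
        = (G.neighborFinset v ∩ G.neighborFinset w).card - 1 := by
      have := hallP x hx
      rw [hrtdef] at this
      have h12 : ((G.neighborFinset x ∩ (G.neighborFinset v ∩ G.neighborFinset w)).card + 1 : ℕ)
          = ((G.neighborFinset v ∩ G.neighborFinset w).card : ℕ) := by
        have : ((G.neighborFinset x ∩ (G.neighborFinset v ∩ G.neighborFinset w)).card : ℝ) + 1
            = ((G.neighborFinset v ∩ G.neighborFinset w).card : ℝ) := by linarith
        exact_mod_cast this
      omega
    have hsub : G.neighborFinset x ∩ (G.neighborFinset v ∩ G.neighborFinset w)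
        ⊆ (G.neighborFinset v ∩ G.neighborFinset w).erase x := by
      intro z hz
      have hz1 := Finset.mem_of_mem_inter_left hz
      have hz2 := Finset.mem_of_mem_inter_right hz
      refine Finset.mem_erase.mpr ⟨?_, hz2⟩
      exact fun h => G.irrefl (h ▸ (SimpleGraph.mem_neighborFinset _ _ _).mp hz1)
    have heq : G.neighborFinset x ∩ (G.neighborFinset v ∩ G.neighborFinset w)
        = (G.neighborFinset v ∩ G.neighborFinset w).erase x := by
      apply Finset.eq_of_subset_of_card_le hsub
      rw [Finset.card_erase_of_mem hx, hcardeq]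
    have hymem : y ∈ (G.neighborFinset v ∩ G.neighborFinset w).erase x :=
      Finset.mem_erase.mpr ⟨hxy.symm, hy⟩
    rw [← heq] at hymem
    exact (SimpleGraph.mem_neighborFinset _ _ _).mp (Finset.mem_of_mem_inter_left hymem)
  refine ⟨hdegeq, hdeg_all, hclique, ?_, ?_⟩
  · -- cardinality of common neighborhood
    rw [show (G.degree v : ℝ) + (G.degree w : ℝ) + 2 - (n : ℝ) = rt by linarith [hd12eq]]
    rw [max_eq_right (by linarith : (1:ℝ) ≤ rt)]
  · -- degree dichotomy
    rcases mul_eq_zero.mp hfact0 with h | h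
    · left
      have hrteq : rt = 1 := by linarith
      rw [hrteq] at hd12eq
      linarith [hd12eq, hdeq]
    · right
      have hrteq : rt = (n:ℝ) - 2 := by linarith
      have : (G.degree v : ℝ) = (n:ℝ) - 2 := by
        rw [hrteq] at hd12eq
        linarith [hdeq]
      have h13 : ((G.degree v + 2 : ℕ) : ℝ) = (n : ℝ) := by push_cast; linarith
      have h14 : G.degree v + 2 = n := by exact_mod_cast h13
      omega
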